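/- Let G be a connected P5-free chordal bipartite graph with bipartition (A,B), |A| = |B|, maximum biclique (A1,B1), and NNO orderings A2 = (u_1,...,u_p), B2 = (v_1,...,v_q). If deg(u_g) ≥ g for all 1 ≤ g ≤ p and deg(v_h) ≥ h for all 1 ≤ h ≤ q, then G has a Hamiltonian path. -/

import Mathlib

set_option linter.unusedSectionVars false
set_option maxHeartbeats 1000000


open SimpleGraph Finset

variable {V : Type*}

/-- `(A, B)` is a bipartition of the graph `G`. -/
def IsBipartitionOf (G : SimpleGraph V) (A B : Finset V) : Prop :=
  Disjoint A B ∧ (∀ v : V, v ∈ A ∨ v ∈ B) ∧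
    ∀ ⦃x y : V⦄, G.Adj x y → (x ∈ A ∧ y ∈ B) ∨ (x ∈ B ∧ y ∈ A)

/-- `G` has no induced path on `n` vertices. -/
def PFree (n : ℕ) (G : SimpleGraph V) : Prop :=
  ∀ f : Fin n → V, Function.Injective f →
    ¬ (∀ i j : Fin n, G.Adj (f i) (f j) ↔ ((i : ℕ) + 1 = (j : ℕ) ∨ (j : ℕ) + 1 = (i : ℕ)))

/-- Every cycle of length at least 6 has a chord. -/
def ChordalBipartite (G : SimpleGraph V) : Prop :=
  ∀ (v : V) (c : G.Walk v v), c.IsCycle → 6 ≤ c.length →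
    ∃ x y : V, x ∈ c.support ∧ y ∈ c.support ∧ G.Adj x y ∧ s(x, y) ∉ c.edges

/-- `(A1, B1)` is a maximal biclique of `G` within the bipartition `(A, B)`:
it is a complete bipartite subgraph and no vertex can be added to either side. -/
def IsMaximalBiclique (G : SimpleGraph V) (A B A1 B1 : Finset V) : Prop :=
  A1 ⊆ A ∧ B1 ⊆ B ∧ (∀ x ∈ A1, ∀ y ∈ B1, G.Adj x y) ∧
    (∀ x ∈ A, (∀ y ∈ B1, G.Adj x y) → x ∈ A1) ∧
    (∀ y ∈ B, (∀ x ∈ A1, G.Adj x y) → y ∈ B1)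


section HamAux



section Aux

variable {V : Type*} {G : SimpleGraph V}

lemma exists_walk_of_chain :
    ∀ (a : V) (l : List V), List.Chain G.Adj a l →
      ∃ (b : V) (w : G.Walk a b), w.support = a :: l := by
  intro a l
  induction l generalizing a with
  | nil => exact fun _ => ⟨a, .nil, rfl⟩
  | cons c l ih =>
    intro h
    replace h : List.IsChain G.Adj (a :: c :: l) := h
    rw [List.isChain_cons_cons] at h
    obtain ⟨b, w, hw⟩ := ih c h.2
    exact ⟨b, .cons h.1 w, by simp [hw]⟩

lemma last_interleave (X Y : ℕ → V) :
    ∀ n : ℕ, (((List.range (n+1)).flatMap fun i => [X i, Y i]).getLast? = some (Y n)) := by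
  intro n
  induction n with
  | zero => rw [show List.range 1 = [0] from rfl]; simp
  | succ n ih =>
    rw [List.range_succ, List.flatMap_append]
    simp

lemma chain'_interleave (X Y : ℕ → V) :
    ∀ n : ℕ, (∀ i, i < n → G.Adj (X i) (Y i)) → (∀ i, i + 1 < n → G.Adj (Y i) (X (i+1))) →
      List.Chain' G.Adj ((List.range n).flatMap fun i => [X i, Y i]) := by
  intro n
  induction n with
  | zero => exact fun _ _ => List.isChain_nil
  | succ n ih =>
    intro h1 h2
    rw [List.range_succ, List.flatMap_append]
    unfold List.Chain'
    rw [List.isChain_append]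
    refine ⟨ih (fun i hi => h1 i (by omega)) (fun i hi => h2 i (by omega)), by
      simp [List.isChain_cons_cons, h1 n (by omega)], ?_⟩
    intro x hx y hy
    cases n with
    | zero => simp at hx
    | succ n =>
      rw [last_interleave X Y n] at hx
      simp at hx hy
      subst hx
      obtain rfl : X (n+1) = y := hy
      exact h2 n (by omega)

end Aux




section Aux2

variable {V : Type*} {G : SimpleGraph V}

/-- distance from start to i-th vertex of a walk is at most i -/
lemma dist_getVert_left (hconn : G.Connected) {x y : V} (p : G.Walk x y) :
    ∀ i : ℕ, G.dist x (p.getVert i) ≤ i := by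
  induction p with
  | nil => intro i; simp [SimpleGraph.Walk.getVert, SimpleGraph.dist_self]
  | @cons a b c h q ih =>
    intro i
    cases i with
    | zero => simp [SimpleGraph.dist_self]
    | succ j =>
      have h1 : G.dist a b ≤ 1 := by
        simpa using SimpleGraph.dist_le (SimpleGraph.Walk.cons h .nil)
      calc G.dist a ((SimpleGraph.Walk.cons h q).getVert (j+1))
          ≤ G.dist a b + G.dist b (q.getVert j) := hconn.dist_triangle
        _ ≤ 1 + j := add_le_add h1 (ih j)
        _ = j + 1 := by omega

lemma dist_getVert_right {x y : V} (p : G.Walk x y) :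
    ∀ i : ℕ, G.dist (p.getVert i) y ≤ p.length - i := by
  induction p with
  | nil => intro i; simp [SimpleGraph.Walk.getVert, SimpleGraph.dist_self]
  | @cons a b c h q ih =>
    intro i
    cases i with
    | zero =>
      simpa using SimpleGraph.dist_le (SimpleGraph.Walk.cons h q)
    | succ j =>
      have := ih j
      simp only [SimpleGraph.Walk.getVert_cons_succ, SimpleGraph.Walk.length_cons]
      omega

lemma dist_le_three (hconn : G.Connected) (hp5 : PFree 5 G) (x y : V) :
    G.dist x y ≤ 3 := by
  by_contra hlt
  push_neg at hlt
  obtain ⟨p, hp⟩ := (hconn x y).exists_walk_length_eq_dist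
  set d := G.dist x y with hd
  have hgv : ∀ i : ℕ, i ≤ d → G.dist x (p.getVert i) = i := by
    intro i hi
    have h1 : G.dist x (p.getVert i) ≤ i := dist_getVert_left hconn p i
    have h2 : G.dist (p.getVert i) y ≤ d - i := by
      simpa [hp] using dist_getVert_right p i
    have h3 : d ≤ G.dist x (p.getVert i) + (d - i) :=
      le_trans hconn.dist_triangle (by exact add_le_add le_rfl h2)
    omega
  have hadj_dist : ∀ a b : V, G.Adj a b → G.dist a b ≤ 1 := fun a b hab => by
    simpa using SimpleGraph.dist_le (SimpleGraph.Walk.cons hab .nil)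
  refine hp5 (fun i : Fin 5 => p.getVert i) ?_ ?_
  · intro i j hij
    replace hij : p.getVert i = p.getVert j := hij
    have : (i : ℕ) = (j : ℕ) := by rw [← hgv i (by omega), ← hgv j (by omega), hij]
    exact Fin.ext this
  · intro i j
    constructor
    · intro hadj
      replace hadj : G.Adj (p.getVert i) (p.getVert j) := hadj
      by_contra hcon
      push_neg at hcon
      rcases lt_trichotomy (i : ℕ) (j : ℕ) with h | h | h
      · have hij : (i : ℕ) + 2 ≤ j := by omega
        have : G.dist x (p.getVert j) ≤ G.dist x (p.getVert i) + G.dist (p.getVert i) (p.getVert j) :=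
          hconn.dist_triangle
        rw [hgv i (by omega), hgv j (by omega)] at this
        have := hadj_dist _ _ hadj
        omega
      · have : i = j := Fin.ext h
        subst this
        exact G.loopless.irrefl _ hadj
      · have hij : (j : ℕ) + 2 ≤ i := by omega
        have : G.dist x (p.getVert i) ≤ G.dist x (p.getVert j) + G.dist (p.getVert j) (p.getVert i) :=
          hconn.dist_triangle
        rw [hgv i (by omega), hgv j (by omega)] at this
        have := hadj_dist _ _ hadj.symm
        omega
    · intro hij
      rcases hij with h | h
      · have : (i : ℕ) < p.length := by omega
        have := p.adj_getVert_succ this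
        rwa [show (i : ℕ) + 1 = (j : ℕ) from h] at this
      · have : (j : ℕ) < p.length := by omega
        have := p.adj_getVert_succ this
        rw [show (j : ℕ) + 1 = (i : ℕ) from h] at this
        exact this.symm

end Aux2





section Aux3
variable {V : Type*} [Fintype V] [DecidableEq V] {G : SimpleGraph V} [DecidableRel G.Adj] {A B : Finset V}

lemma adj_flip (hbip : IsBipartitionOf G A B) {x z : V} (h : G.Adj x z) :
    (x ∈ A ↔ z ∉ A) := by
  obtain ⟨hdis, _, hadj⟩ := hbip
  have hd := fun {a} (ha : a ∈ B) => Finset.disjoint_right.mp hdis ha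
  rcases hadj h with ⟨h1, h2⟩ | ⟨h1, h2⟩
  · exact ⟨fun _ => hd h2, fun _ => h1⟩
  · exact ⟨fun hx => absurd hx (hd h1), fun hz => absurd h2 hz⟩

lemma not_adj_same_side (hbip : IsBipartitionOf G A B) {x z : V}
    (hx : x ∈ A ↔ z ∈ A) : ¬ G.Adj x z := fun h => by
  have := adj_flip hbip h
  tauto

lemma walk_parity (hbip : IsBipartitionOf G A B) {x y : V} (w : G.Walk x y) :
    ((x ∈ A) ↔ (y ∈ A)) ↔ Even w.length := by
  induction w with
  | nil => simp
  | @cons a b c h q ih =>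
    have hf := adj_flip hbip h
    rw [SimpleGraph.Walk.length_cons, Nat.even_add_one, ← ih]
    tauto

/-- nested neighborhoods on one side of the bipartition -/
lemma nested (hconn : G.Connected) (hbip : IsBipartitionOf G A B) (hp5 : PFree 5 G)
    {x y : V} (hx : x ∈ A) (hy : y ∈ A) :
    G.neighborFinset x ⊆ G.neighborFinset y ∨ G.neighborFinset y ⊆ G.neighborFinset x := by
  by_contra hcon
  push_neg at hcon
  obtain ⟨b, hbx, hby⟩ := Finset.not_subset.mp hcon.1
  obtain ⟨b', hb'y, hb'x⟩ := Finset.not_subset.mp hcon.2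
  rw [SimpleGraph.mem_neighborFinset] at hbx hby hb'y hb'x
  have hxy : x ≠ y := fun h => hby (h ▸ hbx)
  -- distance between x and y is exactly 2
  have hd3 : G.dist x y ≤ 3 := dist_le_three hconn hp5 x y
  obtain ⟨w, hw⟩ := (hconn x y).exists_walk_length_eq_dist
  have heven : Even w.length := (walk_parity hbip w).mp (iff_of_true hx hy)
  have hdpos : 0 < G.dist x y := hconn.pos_dist_of_ne hxy
  have hd2 : G.dist x y = 2 := by
    rw [← hw] at hd3 hdpos ⊢
    obtain ⟨t, ht⟩ := heven
    omega
  -- common neighbor c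
  set c := w.getVert 1 with hc
  have hxc : G.Adj x c := by
    have : (0:ℕ) < w.length := by omega
    simpa using w.adj_getVert_succ this
  have hcy : G.Adj c y := by
    have h1 : (1:ℕ) < w.length := by omega
    have := w.adj_getVert_succ h1
    rw [show (1:ℕ)+1 = w.length by omega] at this
    rwa [w.getVert_length] at this
  have hcB : c ∉ A := (adj_flip hbip hxc).mp hx
  have hbB : b ∉ A := (adj_flip hbip hbx).mp hx
  have hb'B : b' ∉ A := (adj_flip hbip hb'y).mp hy
  -- the five vertices b x c y b' form an induced P5
  set f : Fin 5 → V := ![b, x, c, y, b'] with hf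
  have ne1 : b ≠ x := fun h => hbB (h ▸ hx)
  have ne2 : b ≠ c := fun h => hby (h ▸ hcy.symm)
  have ne3 : b ≠ y := fun h => hbB (h ▸ hy)
  have ne4 : b ≠ b' := fun h => hby (h ▸ hb'y)
  have ne5 : x ≠ c := fun h => hcB (h ▸ hx)
  have ne6 : x ≠ b' := fun h => hb'B (h ▸ hx)
  have ne7 : c ≠ y := fun h => hcB (h ▸ hy)
  have ne8 : c ≠ b' := fun h => hb'x (h ▸ hxc)
  have ne9 : y ≠ b' := fun h => hb'B (h ▸ hy)
  have ne1' := ne1.symm; have ne2' := ne2.symm; have ne3' := ne3.symm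
  have ne4' := ne4.symm; have ne5' := ne5.symm; have ne6' := ne6.symm
  have ne7' := ne7.symm; have ne8' := ne8.symm; have ne9' := ne9.symm
  have ad1 : G.Adj b x := hbx.symm
  have ad1' : G.Adj x b := hbx
  have ad2 : G.Adj x c := hxc
  have ad2' : G.Adj c x := hxc.symm
  have ad3 : G.Adj c y := hcy
  have ad3' : G.Adj y c := hcy.symm
  have ad4 : G.Adj y b' := hb'y
  have ad4' : G.Adj b' y := hb'y.symm
  have na1 : ¬ G.Adj b c := not_adj_same_side hbip (iff_of_false hbB hcB)
  have na1' : ¬ G.Adj c b := fun h => na1 h.symm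
  have na2 : ¬ G.Adj b y := fun h => hby h.symm
  have na2' : ¬ G.Adj y b := hby
  have na3 : ¬ G.Adj b b' := not_adj_same_side hbip (iff_of_false hbB hb'B)
  have na3' : ¬ G.Adj b' b := fun h => na3 h.symm
  have na4 : ¬ G.Adj x y := not_adj_same_side hbip (iff_of_true hx hy)
  have na4' : ¬ G.Adj y x := fun h => na4 h.symm
  have na5 : ¬ G.Adj x b' := hb'x
  have na5' : ¬ G.Adj b' x := fun h => hb'x h.symm
  have na6 : ¬ G.Adj c b' := not_adj_same_side hbip (iff_of_false hcB hb'B)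
  have na6' : ¬ G.Adj b' c := fun h => na6 h.symm
  refine hp5 f ?_ ?_
  · intro i j hij
    fin_cases i <;> fin_cases j <;> revert hij <;> simp [hf] <;> tauto
  · intro i j
    fin_cases i <;> fin_cases j <;> simp [hf] <;>
      first | assumption | exact G.loopless _
end Aux3



section Aux4
variable {V : Type*} [Fintype V] [DecidableEq V] {G : SimpleGraph V} [DecidableRel G.Adj]
  {A B A1 B1 : Finset V}

lemma swap_bip (h : IsBipartitionOf G A B) : IsBipartitionOf G B A :=
  ⟨h.1.symm, fun v => (h.2.1 v).symm, fun _ _ hadj => (h.2.2 hadj).symm⟩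

lemma swap_biclique (h : IsMaximalBiclique G A B A1 B1) : IsMaximalBiclique G B A B1 A1 :=
  ⟨h.2.1, h.1, fun y hy x hx => (h.2.2.1 x hx y hy).symm,
    fun y hy hall => h.2.2.2.2 y hy (fun a ha => (hall a ha).symm),
    fun x hx hall => h.2.2.2.1 x hx (fun b hb => (hall b hb).symm)⟩

lemma nbhd_subset (hconn : G.Connected) (hbip : IsBipartitionOf G A B) (hp5 : PFree 5 G)
    (hmax : IsMaximalBiclique G A B A1 B1) {x : V} (hx : x ∈ A \ A1) :
    G.neighborFinset x ⊆ B1 := by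
  intro b hbmem
  have hb : G.Adj x b := (SimpleGraph.mem_neighborFinset G x b).mp hbmem
  by_contra hbB1
  obtain ⟨hxA, hxA1⟩ := Finset.mem_sdiff.mp hx
  have hbB : b ∈ B := by
    rcases hbip.2.2 hb with ⟨h1, h2⟩ | ⟨h1, h2⟩
    · exact h2
    · exact absurd hxA (Finset.disjoint_right.mp hbip.1 h1)
  have h1 : ¬ (∀ a ∈ A1, G.Adj a b) := fun hall => hbB1 (hmax.2.2.2.2 b hbB hall)
  push_neg at h1
  obtain ⟨a, haA1, hab⟩ := h1
  have h2 : ¬ (∀ y ∈ B1, G.Adj x y) := fun hall => hxA1 (hmax.2.2.2.1 x hxA hall)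
  push_neg at h2
  obtain ⟨b', hb'B1, hxb'⟩ := h2
  rcases nested hconn hbip hp5 hxA (hmax.1 haA1) with hsub | hsub
  · exact hab ((SimpleGraph.mem_neighborFinset G a b).mp (hsub hbmem))
  · exact hxb' ((SimpleGraph.mem_neighborFinset G x b').mp
      (hsub ((SimpleGraph.mem_neighborFinset G a b').mpr (hmax.2.2.1 a haA1 b' hb'B1))))

lemma exists_sorted_list (S : Finset V) :
    ∃ l : List V, l.Nodup ∧ (∀ w, w ∈ l ↔ w ∈ S) ∧
      l.Pairwise (fun x y => G.degree y ≤ G.degree x) ∧ l.length = S.card := by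
  induction S using Finset.strongInduction with
  | _ S ih =>
    rcases S.eq_empty_or_nonempty with rfl | hne
    · exact ⟨[], by simp⟩
    obtain ⟨x, hxS, hmax⟩ := Finset.exists_max_image S (fun w => G.degree w) hne
    obtain ⟨l, hnd, hmem, hpw, hlen⟩ := ih (S.erase x) (Finset.erase_ssubset hxS)
    refine ⟨x :: l, ?_, ?_, ?_, ?_⟩
    · rw [List.nodup_cons]
      exact ⟨fun hc => (Finset.mem_erase.mp ((hmem x).mp hc)).1 rfl, hnd⟩
    · intro w
      rw [List.mem_cons, hmem w, Finset.mem_erase]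
      constructor
      · rintro (rfl | ⟨_, h⟩) <;> [exact hxS; exact h]
      · intro hw
        by_cases hwx : w = x
        · exact Or.inl hwx
        · exact Or.inr ⟨hwx, hw⟩
    · rw [List.pairwise_cons]
      exact ⟨fun y hy => hmax y (Finset.mem_erase.mp ((hmem y).mp hy)).2, hpw⟩
    · rw [List.length_cons, hlen, Finset.card_erase_of_mem hxS]
      have := Finset.card_pos.mpr hne
      omega

lemma exists_enum [Nonempty V] (S : Finset V) : ∃ f : ℕ → V,
    (∀ j, j < S.card → f j ∈ S) ∧
    (∀ i j, i < S.card → j < S.card → f i = f j → i = j) ∧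
    (∀ w, w ∈ S → ∃ j, j < S.card ∧ f j = w) ∧
    (∀ i j, i ≤ j → j < S.card → G.degree (f j) ≤ G.degree (f i)) := by
  obtain ⟨l, hnd, hmem, hpw, hlen⟩ := exists_sorted_list (G := G) S
  refine ⟨fun j => l.getD j (Classical.arbitrary V), ?_, ?_, ?_, ?_⟩
  · intro j hj
    show l.getD j (Classical.arbitrary V) ∈ S
    rw [List.getD_eq_getElem _ _ (by omega : j < l.length)]
    exact (hmem _).mp (l.getElem_mem _)
  · intro i j hi hj hij
    replace hij : l.getD i (Classical.arbitrary V) = l.getD j (Classical.arbitrary V) := hij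
    rw [List.getD_eq_getElem _ _ (by omega : i < l.length),
      List.getD_eq_getElem _ _ (by omega : j < l.length)] at hij
    exact (List.Nodup.getElem_inj_iff hnd).mp hij
  · intro w hw
    obtain ⟨⟨j, hj⟩, rfl⟩ := List.mem_iff_get.mp ((hmem w).mpr hw)
    refine ⟨j, by omega, ?_⟩
    show l.getD j (Classical.arbitrary V) = _
    rw [List.getD_eq_getElem _ _ hj]
    rfl
  · intro i j hij hj
    rcases eq_or_lt_of_le hij with rfl | hlt
    · exact le_rfl
    · show G.degree (l.getD j (Classical.arbitrary V)) ≤ G.degree (l.getD i (Classical.arbitrary V))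
      rw [List.getD_eq_getElem _ _ (by omega : i < l.length),
        List.getD_eq_getElem _ _ (by omega : j < l.length)]
      exact List.pairwise_iff_getElem.mp hpw i j (by omega) (by omega) hlt

lemma prefix_adj (S : Finset V) (f : ℕ → V)
    (hinj : ∀ i j, i < S.card → j < S.card → f i = f j → i = j)
    (hsurj : ∀ w, w ∈ S → ∃ j, j < S.card ∧ f j = w)
    (x : V) (hsub : G.neighborFinset x ⊆ S)
    (hnest : ∀ i j, i ≤ j → j < S.card → G.Adj x (f j) → G.Adj x (f i)) :
    ∀ j, j < G.degree x → j < S.card ∧ G.Adj x (f j) := by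
  classical
  set m := S.card with hm
  set T := (Finset.range m).filter (fun i => G.Adj x (f i)) with hT
  have hcard : T.card = G.degree x := by
    rw [← SimpleGraph.card_neighborFinset_eq_degree]
    apply Finset.card_bij (fun i _ => f i)
    · intro i hi
      exact (SimpleGraph.mem_neighborFinset G x (f i)).mpr (Finset.mem_filter.mp hi).2
    · intro i hi j hj hij
      exact hinj i j (Finset.mem_range.mp (Finset.mem_filter.mp hi).1)
        (Finset.mem_range.mp (Finset.mem_filter.mp hj).1) hij
    · intro b hb
      obtain ⟨j, hj, rfl⟩ := hsurj b (hsub hb)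
      exact ⟨j, Finset.mem_filter.mpr ⟨Finset.mem_range.mpr hj,
        (SimpleGraph.mem_neighborFinset G x (f j)).mp hb⟩, rfl⟩
  intro j hj
  by_contra hcon
  have hjT : j ∉ T := by
    intro hmemT
    exact hcon ⟨Finset.mem_range.mp (Finset.mem_filter.mp hmemT).1,
      (Finset.mem_filter.mp hmemT).2⟩
  have hTsub : T ⊆ Finset.range j := by
    intro i hiT
    obtain ⟨hir, hia⟩ := Finset.mem_filter.mp hiT
    rw [Finset.mem_range] at hir ⊢
    by_contra hc
    push_neg at hc
    exact hjT (Finset.mem_filter.mpr ⟨Finset.mem_range.mpr (by omega),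
      hnest j i hc hir hia⟩)
  have := Finset.card_le_card hTsub
  rw [hcard, Finset.card_range] at this
  omega

end Aux4


end HamAux

theorem stmt10 [Fintype V] [DecidableEq V] (G : SimpleGraph V) [DecidableRel G.Adj]
    (A B A1 B1 : Finset V) {p q : ℕ} (u : Fin p → V) (v : Fin q → V)
    (hconn : G.Connected) (hbip : IsBipartitionOf G A B)
    (hcb : ChordalBipartite G) (hp5 : PFree 5 G)
    (hmax : IsMaximalBiclique G A B A1 B1)
    -- `u` enumerates `A \ A1` in non-decreasing degree order (NNO)
    (hu : Function.Injective u) (huA : ∀ i, u i ∈ A \ A1)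
    (huAll : ∀ x ∈ A \ A1, ∃ i, u i = x)
    (humono : ∀ i j : Fin p, i ≤ j → G.degree (u i) ≤ G.degree (u j))
    -- `v` enumerates `B \ B1` in non-decreasing degree order (NNO)
    (hv : Function.Injective v) (hvB : ∀ j, v j ∈ B \ B1)
    (hvAll : ∀ y ∈ B \ B1, ∃ j, v j = y)
    (hvmono : ∀ i j : Fin q, i ≤ j → G.degree (v i) ≤ G.degree (v j))
    (hcard : A.card = B.card)
    (hdu : ∀ g : Fin p, (g : ℕ) + 1 ≤ G.degree (u g))
    (hdv : ∀ h : Fin q, (h : ℕ) + 1 ≤ G.degree (v h)) :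
    ∃ (a b : V) (w : G.Walk a b), w.IsHamiltonian := by
  classical
  haveI hne : Nonempty V := hconn.nonempty
  have hbip' := swap_bip hbip
  have hmax' := swap_biclique hmax
  set d0 : V := Classical.arbitrary V with hd0
  set u' : ℕ → V := fun i => if h : i < p then u ⟨i, h⟩ else d0 with hu'
  set v' : ℕ → V := fun i => if h : i < q then v ⟨i, h⟩ else d0 with hv'
  have hu'A : ∀ i, i < p → u' i ∈ A \ A1 := by
    intro i hi; simp only [hu', dif_pos hi]; exact huA _
  have hv'B : ∀ i, i < q → v' i ∈ B \ B1 := by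
    intro i hi; simp only [hv', dif_pos hi]; exact hvB _
  have hu'inj : ∀ i j, i < p → j < p → u' i = u' j → i = j := by
    intro i j hi hj hij
    simp only [hu', dif_pos hi, dif_pos hj] at hij
    exact congrArg Fin.val (hu hij)
  have hv'inj : ∀ i j, i < q → j < q → v' i = v' j → i = j := by
    intro i j hi hj hij
    simp only [hv', dif_pos hi, dif_pos hj] at hij
    exact congrArg Fin.val (hv hij)
  have hu'all : ∀ x ∈ A \ A1, ∃ i, i < p ∧ u' i = x := by
    intro x hx
    obtain ⟨i, rfl⟩ := huAll x hx
    refine ⟨i, i.2, ?_⟩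
    show (if h : (i : ℕ) < p then u ⟨(i : ℕ), h⟩ else d0) = u i
    rw [dif_pos i.2]
  have hv'all : ∀ y ∈ B \ B1, ∃ i, i < q ∧ v' i = y := by
    intro y hy
    obtain ⟨i, rfl⟩ := hvAll y hy
    refine ⟨i, i.2, ?_⟩
    show (if h : (i : ℕ) < q then v ⟨(i : ℕ), h⟩ else d0) = v i
    rw [dif_pos i.2]
  have hdu' : ∀ i, i < p → i + 1 ≤ G.degree (u' i) := by
    intro i hi
    have heq : u' i = u ⟨i, hi⟩ := by
      show (if h : i < p then u ⟨i, h⟩ else d0) = _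
      rw [dif_pos hi]
    rw [heq]
    exact hdu ⟨i, hi⟩
  have hdv' : ∀ i, i < q → i + 1 ≤ G.degree (v' i) := by
    intro i hi
    have heq : v' i = v ⟨i, hi⟩ := by
      show (if h : i < q then v ⟨i, h⟩ else d0) = _
      rw [dif_pos hi]
    rw [heq]
    exact hdv ⟨i, hi⟩
  obtain ⟨a, haS, hainj, hasurj, hamono⟩ := exists_enum (G := G) A1
  obtain ⟨b, hbS, hbinj, hbsurj, hbmono⟩ := exists_enum (G := G) B1
  set m := A1.card with hm
  set r := B1.card with hr
  -- neighborhoods of non-biclique vertices are inside the biclique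
  have hNu : ∀ i, i < p → G.neighborFinset (u' i) ⊆ B1 := fun i hi =>
    nbhd_subset hconn hbip hp5 hmax (hu'A i hi)
  have hNv : ∀ i, i < q → G.neighborFinset (v' i) ⊆ A1 := fun i hi =>
    nbhd_subset hconn hbip' hp5 hmax' (hv'B i hi)
  -- nestedness along the sorted enumerations
  have hbnest : ∀ i j, i ≤ j → j < r → G.neighborFinset (b j) ⊆ G.neighborFinset (b i) := by
    intro i j hij hj
    have hbiB : b i ∈ B := hmax.2.1 (hbS i (by omega))
    have hbjB : b j ∈ B := hmax.2.1 (hbS j hj)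
    rcases nested hconn hbip' hp5 hbjB hbiB with h | h
    · exact h
    · have hdeg := hbmono i j hij hj
      rw [← SimpleGraph.card_neighborFinset_eq_degree, ← SimpleGraph.card_neighborFinset_eq_degree] at hdeg
      exact le_of_eq (Finset.eq_of_subset_of_card_le h hdeg).symm
  have hanest : ∀ i j, i ≤ j → j < m → G.neighborFinset (a j) ⊆ G.neighborFinset (a i) := by
    intro i j hij hj
    have haiA : a i ∈ A := hmax.1 (haS i (by omega))
    have hajA : a j ∈ A := hmax.1 (haS j hj)
    rcases nested hconn hbip hp5 hajA haiA with h | h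
    · exact h
    · have hdeg := hamono i j hij hj
      rw [← SimpleGraph.card_neighborFinset_eq_degree, ← SimpleGraph.card_neighborFinset_eq_degree] at hdeg
      exact le_of_eq (Finset.eq_of_subset_of_card_le h hdeg).symm
  -- prefix adjacency
  have hub : ∀ g, g < p → ∀ j, j < G.degree (u' g) → j < r ∧ G.Adj (u' g) (b j) := by
    intro g hg
    refine prefix_adj B1 b hbinj hbsurj (u' g) (hNu g hg) ?_
    intro i j hij hj hadj
    exact ((SimpleGraph.mem_neighborFinset G (b i) (u' g)).mp
      (hbnest i j hij hj ((SimpleGraph.mem_neighborFinset G (b j) (u' g)).mpr hadj.symm))).symm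
  have hva : ∀ h, h < q → ∀ j, j < G.degree (v' h) → j < m ∧ G.Adj (v' h) (a j) := by
    intro h hh
    refine prefix_adj A1 a hainj hasurj (v' h) (hNv h hh) ?_
    intro i j hij hj hadj
    exact ((SimpleGraph.mem_neighborFinset G (a i) (v' h)).mp
      (hanest i j hij hj ((SimpleGraph.mem_neighborFinset G (a j) (v' h)).mpr hadj.symm))).symm
  have hab1 : ∀ i, i < m → ∀ j, j < r → G.Adj (a i) (b j) := fun i hi j hj =>
    hmax.2.2.1 (a i) (haS i hi) (b j) (hbS j hj)
  -- counting
  have hpcard : (A \ A1).card = p := by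
    apply Finset.card_eq_of_bijective (fun i _ => u' i)
    · intro x hx
      obtain ⟨i, hi, hix⟩ := hu'all x hx
      exact ⟨i, hi, hix⟩
    · intro i hi
      exact hu'A i hi
    · intro i j hi hj hij
      exact hu'inj i j hi hj hij
  have hqcard : (B \ B1).card = q := by
    apply Finset.card_eq_of_bijective (fun i _ => v' i)
    · intro y hy
      obtain ⟨i, hi, hiy⟩ := hv'all y hy
      exact ⟨i, hi, hiy⟩
    · intro i hi
      exact hv'B i hi
    · intro i j hi hj hij
      exact hv'inj i j hi hj hij
  have hsum1 := Finset.card_sdiff_add_card_eq_card hmax.1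
  have hsum2 := Finset.card_sdiff_add_card_eq_card hmax.2.1
  set n := A.card with hn
  have hn1 : n = m + p := by omega
  have hn2 : n = r + q := by omega
  have hn0 : 0 < n := by
    rcases hbip.2.1 d0 with h | h
    · have := Finset.card_pos.mpr ⟨d0, h⟩
      omega
    · have := Finset.card_pos.mpr ⟨d0, h⟩
      omega
  have hpr : p ≤ r := by
    rcases Nat.eq_zero_or_pos p with rfl | hp0
    · omega
    have h1 := hdu' (p-1) (by omega)
    have h2 : G.degree (u' (p-1)) ≤ r := by
      rw [← SimpleGraph.card_neighborFinset_eq_degree]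
      exact Finset.card_le_card (hNu (p-1) (by omega))
    omega
  have hqm : q ≤ m := by
    rcases Nat.eq_zero_or_pos q with rfl | hq0
    · omega
    have h1 := hdv' (q-1) (by omega)
    have h2 : G.degree (v' (q-1)) ≤ m := by
      rw [← SimpleGraph.card_neighborFinset_eq_degree]
      exact Finset.card_le_card (hNv (q-1) (by omega))
    omega
  -- the interleaved sequences
  set X : ℕ → V := fun i =>
    if i < p then u' i else if i < r then a (q + (i - p)) else a (q - 1 - (i - r)) with hX
  set Y : ℕ → V := fun i => if i < r then b i else v' (q - 1 - (i - r)) with hY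
  have hXlt : ∀ i, i < p → X i = u' i := by
    intro i hi; simp only [hX, if_pos hi]
  have hXmid : ∀ i, p ≤ i → i < r → X i = a (q + (i - p)) := by
    intro i h1 h2; simp only [hX, if_neg (by omega : ¬ i < p), if_pos h2]
  have hXhi : ∀ i, r ≤ i → X i = a (q - 1 - (i - r)) := by
    intro i h1
    simp only [hX, if_neg (by omega : ¬ i < p), if_neg (by omega : ¬ i < r)]
  have hYlt : ∀ i, i < r → Y i = b i := by
    intro i hi; simp only [hY, if_pos hi]
  have hYhi : ∀ i, r ≤ i → Y i = v' (q - 1 - (i - r)) := by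
    intro i h1; simp only [hY, if_neg (by omega : ¬ i < r)]
  -- index bounds for the a-indices used by X
  have hmidlt : ∀ i, p ≤ i → i < r → q + (i - p) < m := by intro i h1 h2; omega
  have hhilt : ∀ i, r ≤ i → i < n → q - 1 - (i - r) < q := by intro i h1 h2; omega
  -- adjacency along the path
  have hadj1 : ∀ i, i < n → G.Adj (X i) (Y i) := by
    intro i hi
    by_cases h1 : i < p
    · rw [hXlt i h1, hYlt i (by omega)]
      exact (hub i h1 i (by have := hdu' i h1; omega)).2
    · by_cases h2 : i < r
      · rw [hXmid i (by omega) h2, hYlt i h2]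
        exact hab1 _ (hmidlt i (by omega) h2) i h2
      · rw [hXhi i (by omega), hYhi i (by omega)]
        have hjq : q - 1 - (i - r) < q := hhilt i (by omega) hi
        exact ((hva _ hjq _ (by have := hdv' _ hjq; omega)).2).symm
  have hadj2 : ∀ i, i + 1 < n → G.Adj (Y i) (X (i + 1)) := by
    intro i hi
    by_cases h1 : i + 1 < p
    · rw [hYlt i (by omega), hXlt (i+1) (by omega)]
      exact ((hub (i+1) (by omega) i (by have := hdu' (i+1) (by omega); omega)).2).symm
    · by_cases h2 : i + 1 < r
      · rw [hYlt i (by omega), hXmid (i+1) (by omega) h2]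
        exact (hab1 _ (hmidlt (i+1) (by omega) h2) i (by omega)).symm
      · by_cases h3 : i + 1 = r
        · rw [hYlt i (by omega), hXhi (i+1) (by omega)]
          have hq1 : 1 ≤ q := by omega
          refine (hab1 _ ?_ i (by omega)).symm
          omega
        · -- r ≤ i
          have hri : r ≤ i := by omega
          rw [hYhi i hri, hXhi (i+1) (by omega)]
          set jj := q - 1 - (i - r) with hjj
          have hjq : jj < q := hhilt i hri (by omega)
          have hjj1 : 1 ≤ jj := by omega
          have hrw : q - 1 - (i + 1 - r) = jj - 1 := by omega
          rw [hrw]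
          exact (hva jj hjq (jj - 1) (by have := hdv' jj hjq; omega)).2
  -- membership
  have hXA : ∀ i, i < n → X i ∈ A := by
    intro i hi
    by_cases h1 : i < p
    · rw [hXlt i h1]; exact (Finset.mem_sdiff.mp (hu'A i h1)).1
    · by_cases h2 : i < r
      · rw [hXmid i (by omega) h2]; exact hmax.1 (haS _ (hmidlt i (by omega) h2))
      · rw [hXhi i (by omega)]
        exact hmax.1 (haS _ (by have := hhilt i (by omega) hi; omega))
  have hYB : ∀ i, i < n → Y i ∈ B := by
    intro i hi
    by_cases h2 : i < r
    · rw [hYlt i h2]; exact hmax.2.1 (hbS i h2)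
    · rw [hYhi i (by omega)]
      exact (Finset.mem_sdiff.mp (hv'B _ (hhilt i (by omega) hi))).1
  -- X injective on [0, n)
  have hXmemA1 : ∀ i, i < p → X i ∉ A1 := by
    intro i h1; rw [hXlt i h1]; exact (Finset.mem_sdiff.mp (hu'A i h1)).2
  have hXinj : ∀ i j, i < n → j < n → X i = X j → i = j := by
    have key : ∀ i j, i < n → j < n → i < j → X i = X j → False := by
      intro i j hi hj hij heq
      by_cases h1 : i < p
      · -- X i = u' i ∉ A1, X j must be u' j or a _
        by_cases h2 : j < p
        · rw [hXlt i h1, hXlt j h2] at heq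
          exact absurd (hu'inj i j h1 h2 heq) (by omega)
        · have : X j ∈ A1 := by
            by_cases h3 : j < r
            · rw [hXmid j (by omega) h3]; exact haS _ (hmidlt j (by omega) h3)
            · rw [hXhi j (by omega)]
              exact haS _ (by have := hhilt j (by omega) hj; omega)
          exact (hXmemA1 i h1) (heq ▸ this)
      · -- both i, j in a-region
        have h2 : ¬ j < p := by omega
        have hgeti : ∃ ii, ii < m ∧ X i = a ii ∧
            (if i < r then ii = q + (i - p) else ii = q - 1 - (i - r)) := by
          by_cases h3 : i < r
          · exact ⟨q + (i - p), hmidlt i (by omega) h3, hXmid i (by omega) h3, by simp [h3]⟩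
          · refine ⟨q - 1 - (i - r), by have := hhilt i (by omega) hi; omega,
              hXhi i (by omega), by simp [h3]⟩
        have hgetj : ∃ jj, jj < m ∧ X j = a jj ∧
            (if j < r then jj = q + (j - p) else jj = q - 1 - (j - r)) := by
          by_cases h3 : j < r
          · exact ⟨q + (j - p), hmidlt j (by omega) h3, hXmid j (by omega) h3, by simp [h3]⟩
          · refine ⟨q - 1 - (j - r), by have := hhilt j (by omega) hj; omega,
              hXhi j (by omega), by simp [h3]⟩
        obtain ⟨ii, hiim, hXi, hii⟩ := hgeti
        obtain ⟨jj, hjjm, hXj, hjj⟩ := hgetj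
        have heq2 : ii = jj := hainj ii jj hiim hjjm (by rw [← hXi, ← hXj, heq])
        by_cases h3 : i < r <;> by_cases h4 : j < r <;>
          simp only [h3, h4, if_true, if_false, if_pos, if_neg] at hii hjj <;> omega
    intro i j hi hj heq
    rcases lt_trichotomy i j with h | h | h
    · exact absurd (key i j hi hj h heq) (fun f => f)
    · exact h
    · exact absurd (key j i hj hi h heq.symm) (fun f => f)
  have hYinj : ∀ i j, i < n → j < n → Y i = Y j → i = j := by
    have key : ∀ i j, i < n → j < n → i < j → Y i = Y j → False := by
      intro i j hi hj hij heq
      by_cases h1 : i < r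
      · by_cases h2 : j < r
        · rw [hYlt i h1, hYlt j h2] at heq
          exact absurd (hbinj i j h1 h2 heq) (by omega)
        · rw [hYlt i h1, hYhi j (by omega)] at heq
          have : v' (q - 1 - (j - r)) ∈ B \ B1 := hv'B _ (hhilt j (by omega) hj)
          exact (Finset.mem_sdiff.mp this).2 (heq ▸ hbS i h1)
      · have h2 : ¬ j < r := by omega
        rw [hYhi i (by omega), hYhi j (by omega)] at heq
        have hiq := hhilt i (by omega) hi
        have hjq := hhilt j (by omega) hj
        have := hv'inj _ _ hiq hjq heq
        omega
    intro i j hi hj heq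
    rcases lt_trichotomy i j with h | h | h
    · exact absurd (key i j hi hj h heq) (fun f => f)
    · exact h
    · exact absurd (key j i hj hi h heq.symm) (fun f => f)
  -- coverage
  have hXcov : ∀ w ∈ A, ∃ i, i < n ∧ X i = w := by
    intro w hw
    by_cases hw1 : w ∈ A1
    · obtain ⟨jj, hjjm, rfl⟩ := hasurj w hw1
      by_cases hjq : jj < q
      · refine ⟨r + (q - 1 - jj), by omega, ?_⟩
        rw [hXhi _ (by omega)]
        congr 1
        omega
      · refine ⟨p + (jj - q), by omega, ?_⟩
        rw [hXmid _ (by omega) (by omega)]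
        congr 1
        omega
    · obtain ⟨i, hip, hix⟩ := hu'all w (Finset.mem_sdiff.mpr ⟨hw, hw1⟩)
      exact ⟨i, by omega, by rw [hXlt i hip]; exact hix⟩
  have hYcov : ∀ w ∈ B, ∃ i, i < n ∧ Y i = w := by
    intro w hw
    by_cases hw1 : w ∈ B1
    · obtain ⟨jj, hjjm, rfl⟩ := hbsurj w hw1
      exact ⟨jj, by omega, by rw [hYlt _ (by omega)]⟩
    · obtain ⟨i, hiq, hiy⟩ := hv'all w (Finset.mem_sdiff.mpr ⟨hw, hw1⟩)
      refine ⟨r + (q - 1 - i), by omega, ?_⟩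
      rw [hYhi _ (by omega)]
      rw [show q - 1 - (r + (q - 1 - i) - r) = i by omega]
      exact hiy
  -- assemble the list
  set L : List V := (List.range n).flatMap (fun i => [X i, Y i]) with hL
  have hchain : L.Chain' G.Adj := chain'_interleave X Y n hadj1 hadj2
  have hXneY : ∀ i j, i < n → j < n → X i ≠ Y j := by
    intro i j hi hj heq
    exact Finset.disjoint_left.mp hbip.1 (heq ▸ hXA i hi) (hYB j hj)
  have hnodup : L.Nodup := by
    rw [hL, List.nodup_flatMap]
    constructor
    · intro x hx
      simp only [List.mem_range] at hx
      simp only [List.nodup_cons, List.mem_singleton, List.nodup_nil, and_true]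
      exact ⟨fun h => hXneY x x hx hx h, List.not_mem_nil⟩
    · rw [List.pairwise_iff_getElem]
      intro i j hi hj hij
      simp only [List.length_range] at hi hj
      simp only [List.getElem_range]
      intro z hz1 hz2
      simp only [List.mem_cons, List.mem_singleton, List.not_mem_nil, or_false] at hz1 hz2
      rcases hz1 with rfl | rfl <;> rcases hz2 with h | h
      · exact absurd (hXinj i j hi hj h) (by omega)
      · exact hXneY i j hi hj h
      · exact hXneY j i hj hi h.symm
      · exact absurd (hYinj i j hi hj h) (by omega)
  have hmemL : ∀ w : V, w ∈ L := by
    intro w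
    rw [hL, List.mem_flatMap]
    rcases hbip.2.1 w with hw | hw
    · obtain ⟨i, hi, hix⟩ := hXcov w hw
      exact ⟨i, List.mem_range.mpr hi, by rw [hix]; simp⟩
    · obtain ⟨i, hi, hiy⟩ := hYcov w hw
      exact ⟨i, List.mem_range.mpr hi, by rw [hiy]; simp⟩
  have hLne : L ≠ [] := fun h => by simpa [h] using hmemL d0
  obtain ⟨hd, tl, hLht⟩ := List.exists_cons_of_ne_nil hLne
  have hchain2 : List.Chain G.Adj hd tl := by
    rw [hLht] at hchain
    exact hchain
  obtain ⟨bb, w, hw⟩ := exists_walk_of_chain hd tl hchain2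
  refine ⟨hd, bb, w, ?_⟩
  intro x
  rw [hw, ← hLht]
  exact List.count_eq_one_of_mem hnodup (hmemL x)
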